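/- Let μ₀, μ₁ ∈ ℝ, σ₀, σ₁ > 0, t ∈ [0,1), and x ∈ ℝ. Then ∫ ((x₁ − x)/(1−t)) · N((x − t x₁)/(1−t) | μ₀, σ₀²) · N(x₁ | μ₁, σ₁²) dx₁ = (exp(−(x − μ₀(1−t) − μ₁ t)² / (2(σ₁² t² + σ₀² (1−t)²))) / √(2π)) · (1−t)(σ₁² t (x − μ₀) + σ₀² (t−1)(x − μ₁)) / (σ₁² t² + σ₀² (1−t)²)^{3/2}. -/

import Mathlib

open MeasureTheory Real

lemma int_self_mul_gauss (a : ℝ) : ∫ u : ℝ, u * Real.exp (-a * u ^ 2) = 0 := by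
  have h : ∫ u : ℝ, (fun v : ℝ => v * Real.exp (-a * v ^ 2)) (-u)
      = ∫ u : ℝ, u * Real.exp (-a * u ^ 2) :=
    integral_neg_eq_self (fun v : ℝ => v * Real.exp (-a * v ^ 2)) volume
  simp only [neg_sq, neg_mul] at h
  rw [integral_neg] at h
  simp only [neg_mul] at *
  linarith

lemma int_linear_gauss (a m x : ℝ) (ha : 0 < a) :
    ∫ x₁ : ℝ, (x₁ - x) * Real.exp (-a * (x₁ - m) ^ 2)
      = (m - x) * Real.sqrt (Real.pi / a) := by
  have h := integral_sub_right_eq_self (μ := volume)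
    (fun u : ℝ => (u + m - x) * Real.exp (-a * u ^ 2)) m
  simp only [sub_add_cancel] at h
  have h2 : (∫ x₁ : ℝ, (x₁ - x) * Real.exp (-a * (x₁ - m) ^ 2))
      = ∫ u : ℝ, (u + m - x) * Real.exp (-a * u ^ 2) := by
    rw [← h]
  rw [h2]
  have hint1 : Integrable (fun u : ℝ => u * Real.exp (-a * u ^ 2)) :=
    integrable_mul_exp_neg_mul_sq ha
  have hint2 : Integrable (fun u : ℝ => (m - x) * Real.exp (-a * u ^ 2)) :=
    (integrable_exp_neg_mul_sq ha).const_mul _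
  have h3 : (fun u : ℝ => (u + m - x) * Real.exp (-a * u ^ 2))
      = fun u : ℝ => u * Real.exp (-a * u ^ 2) + (m - x) * Real.exp (-a * u ^ 2) := by
    ext u; ring
  rw [h3, integral_add hint1 hint2, int_self_mul_gauss, zero_add,
    integral_const_mul, integral_gaussian]


/-- One-dimensional Gaussian density `N(y | μ, σ²)`. -/
noncomputable def gaussDensity (μ σ y : ℝ) : ℝ :=
  (Real.sqrt (2 * Real.pi * σ ^ 2))⁻¹ * Real.exp (-(y - μ) ^ 2 / (2 * σ ^ 2))

/-- Closed form of the first-moment Gaussian integral (numerator of the explicit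
flow-matching vector field between two Gaussians under the linear conditional flow). -/
theorem gaussian_flow_matching_first_moment (μ₀ μ₁ σ₀ σ₁ t x : ℝ)
    (hσ₀ : 0 < σ₀) (hσ₁ : 0 < σ₁) (ht : t ∈ Set.Ico (0 : ℝ) 1) :
    ∫ x₁ : ℝ, (x₁ - x) / (1 - t) *
        (gaussDensity μ₀ σ₀ ((x - t * x₁) / (1 - t)) * gaussDensity μ₁ σ₁ x₁) =
      Real.exp (-(x - μ₀ * (1 - t) - μ₁ * t) ^ 2 /
          (2 * (σ₁ ^ 2 * t ^ 2 + σ₀ ^ 2 * (1 - t) ^ 2))) / Real.sqrt (2 * Real.pi) *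
        ((1 - t) * (σ₁ ^ 2 * t * (x - μ₀) + σ₀ ^ 2 * (t - 1) * (x - μ₁)) /
          (σ₁ ^ 2 * t ^ 2 + σ₀ ^ 2 * (1 - t) ^ 2) ^ ((3 : ℝ) / 2)) := by
  obtain ⟨ht0, ht1⟩ := ht
  have hs : (0 : ℝ) < 1 - t := by linarith
  have hsne : (1 : ℝ) - t ≠ 0 := ne_of_gt hs
  have hσ₀ne : σ₀ ≠ 0 := ne_of_gt hσ₀
  have hσ₁ne : σ₁ ≠ 0 := ne_of_gt hσ₁
  set D : ℝ := σ₁ ^ 2 * t ^ 2 + σ₀ ^ 2 * (1 - t) ^ 2 with hD_def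
  have hD : 0 < D := by positivity
  have hDne : D ≠ 0 := ne_of_gt hD
  set a : ℝ := D / (2 * σ₀ ^ 2 * σ₁ ^ 2 * (1 - t) ^ 2) with ha_def
  have ha : 0 < a := by positivity
  set m : ℝ := (t * σ₁ ^ 2 * (x - μ₀ * (1 - t)) + μ₁ * σ₀ ^ 2 * (1 - t) ^ 2) / D with hm_def
  set R : ℝ := (x - μ₀ * (1 - t) - μ₁ * t) ^ 2 / (2 * D) with hR_def
  set C : ℝ := (Real.sqrt (2 * Real.pi * σ₀ ^ 2))⁻¹ * (Real.sqrt (2 * Real.pi * σ₁ ^ 2))⁻¹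
      * Real.exp (-R) / (1 - t) with hC_def
  have hkey : ∀ x₁ : ℝ, (x₁ - x) / (1 - t) *
        (gaussDensity μ₀ σ₀ ((x - t * x₁) / (1 - t)) * gaussDensity μ₁ σ₁ x₁)
      = C * ((x₁ - x) * Real.exp (-a * (x₁ - m) ^ 2)) := by
    intro x₁
    unfold gaussDensity
    have hexp : -((x - t * x₁) / (1 - t) - μ₀) ^ 2 / (2 * σ₀ ^ 2)
        + (-(x₁ - μ₁) ^ 2 / (2 * σ₁ ^ 2)) = -R + (-a * (x₁ - m) ^ 2) := by
      rw [hR_def, ha_def, hm_def, hD_def]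
      field_simp
      ring
    have h1 : Real.exp (-((x - t * x₁) / (1 - t) - μ₀) ^ 2 / (2 * σ₀ ^ 2))
        * Real.exp (-(x₁ - μ₁) ^ 2 / (2 * σ₁ ^ 2))
        = Real.exp (-R) * Real.exp (-a * (x₁ - m) ^ 2) := by
      rw [← Real.exp_add, ← Real.exp_add, hexp]
    calc (x₁ - x) / (1 - t) *
          ((Real.sqrt (2 * Real.pi * σ₀ ^ 2))⁻¹
              * Real.exp (-((x - t * x₁) / (1 - t) - μ₀) ^ 2 / (2 * σ₀ ^ 2))
            * ((Real.sqrt (2 * Real.pi * σ₁ ^ 2))⁻¹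
              * Real.exp (-(x₁ - μ₁) ^ 2 / (2 * σ₁ ^ 2))))
        = (Real.sqrt (2 * Real.pi * σ₀ ^ 2))⁻¹ * (Real.sqrt (2 * Real.pi * σ₁ ^ 2))⁻¹
            / (1 - t) * ((x₁ - x)
            * (Real.exp (-((x - t * x₁) / (1 - t) - μ₀) ^ 2 / (2 * σ₀ ^ 2))
              * Real.exp (-(x₁ - μ₁) ^ 2 / (2 * σ₁ ^ 2)))) := by ring
      _ = C * ((x₁ - x) * Real.exp (-a * (x₁ - m) ^ 2)) := by
          rw [h1, hC_def]; ring
  have hInt : (∫ x₁ : ℝ, (x₁ - x) / (1 - t) *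
        (gaussDensity μ₀ σ₀ ((x - t * x₁) / (1 - t)) * gaussDensity μ₁ σ₁ x₁))
      = ∫ x₁ : ℝ, C * ((x₁ - x) * Real.exp (-a * (x₁ - m) ^ 2)) := by
    congr 1
    ext x₁
    exact hkey x₁
  rw [hInt, integral_const_mul, int_linear_gauss a m x ha]
  -- now pure scalar algebra
  have h2π : (0 : ℝ) < 2 * Real.pi := by positivity
  have hsq0 : Real.sqrt (2 * Real.pi * σ₀ ^ 2) = Real.sqrt (2 * Real.pi) * σ₀ := by
    rw [Real.sqrt_mul h2π.le, Real.sqrt_sq hσ₀.le]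
  have hsq1 : Real.sqrt (2 * Real.pi * σ₁ ^ 2) = Real.sqrt (2 * Real.pi) * σ₁ := by
    rw [Real.sqrt_mul h2π.le, Real.sqrt_sq hσ₁.le]
  have hsqa : Real.sqrt (Real.pi / a)
      = Real.sqrt (2 * Real.pi) * (σ₀ * σ₁ * (1 - t)) / Real.sqrt D := by
    rw [ha_def]
    rw [show Real.pi / (D / (2 * σ₀ ^ 2 * σ₁ ^ 2 * (1 - t) ^ 2))
        = 2 * Real.pi * (σ₀ * σ₁ * (1 - t)) ^ 2 / D by field_simp]
    rw [Real.sqrt_div (by positivity : (0:ℝ) ≤ 2 * Real.pi * (σ₀ * σ₁ * (1 - t)) ^ 2) D,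
      Real.sqrt_mul h2π.le, Real.sqrt_sq (by positivity : (0:ℝ) ≤ σ₀ * σ₁ * (1 - t))]
  have hrD : D ^ ((3 : ℝ) / 2) = D * Real.sqrt D := by
    rw [show (3 : ℝ) / 2 = 1 + 1 / 2 by norm_num, Real.rpow_add hD, Real.rpow_one,
      ← Real.sqrt_eq_rpow]
  have hmx : m - x = (1 - t) * (σ₁ ^ 2 * t * (x - μ₀) + σ₀ ^ 2 * (t - 1) * (x - μ₁)) / D := by
    rw [hm_def, hD_def]
    field_simp
    ring
  have hexpR : Real.exp (-(x - μ₀ * (1 - t) - μ₁ * t) ^ 2 / (2 * D)) = Real.exp (-R) := by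
    rw [hR_def, neg_div]
  rw [hC_def, hsq0, hsq1, hsqa, hrD, hmx, hexpR]
  have hq : Real.sqrt (2 * Real.pi) ≠ 0 := by positivity
  have hr : Real.sqrt D ≠ 0 := by positivity
  field_simp
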